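/- Let n ≥ 1 and let z_1, …, z_n be real numbers with ∑_{i=1}^n z_i = 0. Set p_r = ∑_i z_i^r. Then the sum of (z_i - z_j)^4 (z_k - z_l)^2 over all ordered quadruples (i, j, k, l) of pairwise distinct indices in {1, …, n} equals 12(n-2)·p_2^3 + 8(2n-5)·p_3^2 + (4n^2 - 36n + 60)·p_2·p_4 - 4n(n-1)·p_6. -/
import Mathlib

open Finset

private lemma inj4 {n : ℕ} {a b c d : Fin n} (hab : a ≠ b) (hac : a ≠ c) (had : a ≠ d)
    (hbc : b ≠ c) (hbd : b ≠ d) (hcd : c ≠ d) :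
    Function.Injective ![a, b, c, d] := by
  intro s t h
  fin_cases s <;> fin_cases t <;> simp_all

private lemma emb_sum {n : ℕ} (F : Fin n → Fin n → Fin n → Fin n → ℝ) :
    ∑ f : Fin 4 ↪ Fin n, F (f 0) (f 1) (f 2) (f 3)
      = ∑ i, ∑ j ∈ univ.erase i, ∑ k ∈ (univ.erase i).erase j,
          ∑ l ∈ ((univ.erase i).erase j).erase k, F i j k l := by
  simp only [Finset.sum_sigma']
  refine Finset.sum_bij' (fun f _ => ⟨f 0, f 1, f 2, f 3⟩)
    (fun x hx => ⟨![x.1, x.2.1, x.2.2.1, x.2.2.2], ?_⟩) ?_ ?_ ?_ ?_ ?_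
  · simp only [Finset.mem_sigma, Finset.mem_erase, Finset.mem_univ, and_true] at hx
    obtain ⟨-, h10, ⟨h21, h20⟩, h32, h31, h30⟩ := hx
    exact inj4 h10.symm h20.symm h30.symm h21.symm h31.symm h32.symm
  · intro f _
    have h := f.injective
    simp only [Finset.mem_sigma, Finset.mem_erase, Finset.mem_univ, and_true]
    refine ⟨trivial, ?_, ⟨?_, ?_⟩, ?_, ?_, ?_⟩ <;>
      · intro hc; have := h hc; simp_all
  · intro x hx; simp
  · intro f _
    ext s
    fin_cases s <;> simp
  · intro x hx
    simp
  · intro f _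
    simp

theorem ordered_double_edge_plus_edge_square_graph_sum
    (n : ℕ) (hn : 1 ≤ n) (z : Fin n → ℝ) (hz : ∑ i, z i = 0)
    (p₂ p₃ p₄ p₆ : ℝ)
    (hp₂ : p₂ = ∑ i, z i ^ 2) (hp₃ : p₃ = ∑ i, z i ^ 3)
    (hp₄ : p₄ = ∑ i, z i ^ 4) (hp₆ : p₆ = ∑ i, z i ^ 6) :
    (∑ f : Fin 4 ↪ Fin n, (z (f 0) - z (f 1)) ^ 4 * (z (f 2) - z (f 3)) ^ 2)
      = 12 * ((n : ℝ) - 2) * p₂ ^ 3 + 8 * (2 * (n : ℝ) - 5) * p₃ ^ 2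
        + (4 * (n : ℝ) ^ 2 - 36 * (n : ℝ) + 60) * p₂ * p₄
        - 4 * (n : ℝ) * ((n : ℝ) - 1) * p₆ := by
  set p₅ : ℝ := ∑ i, z i ^ 5 with hp₅
  -- one-variable power-sum identities
  have e2 : ∀ i : Fin n, ∑ l, (z i - z l) ^ 2 = (n : ℝ) * z i ^ 2 + p₂ := by
    intro i
    have h : ∀ l, (z i - z l) ^ 2 = z i ^ 2 - (2 * z i) * z l + z l ^ 2 := fun l => by ring
    simp only [h, Finset.sum_add_distrib, Finset.sum_sub_distrib, ← Finset.mul_sum,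
      Finset.sum_const, Finset.card_univ, Fintype.card_fin, nsmul_eq_mul, hz, ← hp₂]
    ring
  have e2' : ∀ i : Fin n, ∑ l, (z l - z i) ^ 2 = (n : ℝ) * z i ^ 2 + p₂ := by
    intro i
    rw [← e2 i]
    exact Finset.sum_congr rfl fun l _ => by ring
  have e4 : ∀ i : Fin n, ∑ j, (z i - z j) ^ 4
      = (n : ℝ) * z i ^ 4 + 6 * p₂ * z i ^ 2 - 4 * p₃ * z i + p₄ := by
    intro i
    have h : ∀ j, (z i - z j) ^ 4 = z i ^ 4 - (4 * z i ^ 3) * z j + (6 * z i ^ 2) * z j ^ 2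
        - (4 * z i) * z j ^ 3 + z j ^ 4 := fun j => by ring
    simp only [h, Finset.sum_add_distrib, Finset.sum_sub_distrib, ← Finset.mul_sum,
      Finset.sum_const, Finset.card_univ, Fintype.card_fin, nsmul_eq_mul, hz, ← hp₂, ← hp₃, ← hp₄]
    ring
  have e4b : ∀ i : Fin n, ∑ j, (z i - z j) ^ 4 * z j ^ 2
      = p₂ * z i ^ 4 - 4 * p₃ * z i ^ 3 + 6 * p₄ * z i ^ 2 - 4 * p₅ * z i + p₆ := by
    intro i
    have h : ∀ j, (z i - z j) ^ 4 * z j ^ 2 = (z i ^ 4) * z j ^ 2 - (4 * z i ^ 3) * z j ^ 3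
        + (6 * z i ^ 2) * z j ^ 4 - (4 * z i) * z j ^ 5 + z j ^ 6 := fun j => by ring
    simp only [h, Finset.sum_add_distrib, Finset.sum_sub_distrib, ← Finset.mul_sum,
      ← hp₂, ← hp₃, ← hp₄, ← hp₅, ← hp₆]
    ring
  have e6 : ∀ i : Fin n, ∑ j, (z i - z j) ^ 6
      = (n : ℝ) * z i ^ 6 + 15 * p₂ * z i ^ 4 - 20 * p₃ * z i ^ 3 + 15 * p₄ * z i ^ 2
        - 6 * p₅ * z i + p₆ := by
    intro i
    have h : ∀ j, (z i - z j) ^ 6 = z i ^ 6 - (6 * z i ^ 5) * z j + (15 * z i ^ 4) * z j ^ 2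
        - (20 * z i ^ 3) * z j ^ 3 + (15 * z i ^ 2) * z j ^ 4 - (6 * z i) * z j ^ 5 + z j ^ 6 :=
      fun j => by ring
    simp only [h, Finset.sum_add_distrib, Finset.sum_sub_distrib, ← Finset.mul_sum,
      Finset.sum_const, Finset.card_univ, Fintype.card_fin, nsmul_eq_mul, hz,
      ← hp₂, ← hp₃, ← hp₄, ← hp₅, ← hp₆]
    ring
  rw [emb_sum (fun i j k l => (z i - z j) ^ 4 * (z k - z l) ^ 2)]
  have step1 : ∀ i : Fin n, ∀ j ∈ univ.erase i, ∀ k ∈ (univ.erase i).erase j,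
      ∑ l ∈ ((univ.erase i).erase j).erase k, (z i - z j) ^ 4 * (z k - z l) ^ 2
        = (z i - z j) ^ 4 * ((n : ℝ) * z k ^ 2 + p₂)
          - (z i - z j) ^ 4 * (z k - z i) ^ 2 - (z i - z j) ^ 4 * (z k - z j) ^ 2 := by
    intro i j hj k hk
    rw [Finset.sum_erase_eq_sub hk, Finset.sum_erase_eq_sub hj,
      Finset.sum_erase_eq_sub (Finset.mem_univ i), ← Finset.mul_sum, e2 k]
    ring
  have step2 : ∀ i : Fin n, ∀ j ∈ univ.erase i,
      ∑ k ∈ (univ.erase i).erase j,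
        ((z i - z j) ^ 4 * ((n : ℝ) * z k ^ 2 + p₂)
          - (z i - z j) ^ 4 * (z k - z i) ^ 2 - (z i - z j) ^ 4 * (z k - z j) ^ 2)
        = (z i - z j) ^ 4
            * (2 * (n : ℝ) * p₂ - 4 * p₂ - 2 * (n : ℝ) * z i ^ 2 - 2 * (n : ℝ) * z j ^ 2)
          + 2 * (z i - z j) ^ 6 := by
    intro i j hj
    have hq : ∑ k : Fin n, ((n : ℝ) * z k ^ 2 + p₂) = (n : ℝ) * p₂ + (n : ℝ) * p₂ := by
      simp only [Finset.sum_add_distrib, ← Finset.mul_sum, ← hp₂, Finset.sum_const,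
        Finset.card_univ, Fintype.card_fin, nsmul_eq_mul]
    rw [Finset.sum_erase_eq_sub hj, Finset.sum_erase_eq_sub (Finset.mem_univ i)]
    simp only [Finset.sum_sub_distrib, ← Finset.mul_sum]
    rw [hq, e2' i, e2' j]
    ring
  have step3 : ∀ i : Fin n,
      ∑ j ∈ univ.erase i,
        ((z i - z j) ^ 4
            * (2 * (n : ℝ) * p₂ - 4 * p₂ - 2 * (n : ℝ) * z i ^ 2 - 2 * (n : ℝ) * z j ^ 2)
          + 2 * (z i - z j) ^ 6)
        = (-2 * (n : ℝ) ^ 2 + 2 * (n : ℝ)) * z i ^ 6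
          + (2 * (n : ℝ) ^ 2 * p₂ - 18 * (n : ℝ) * p₂ + 30 * p₂) * z i ^ 4
          + (16 * (n : ℝ) - 40) * p₃ * z i ^ 3
          + ((12 * (n : ℝ) - 24) * p₂ ^ 2 + (-14 * (n : ℝ) + 30) * p₄) * z i ^ 2
          + ((-8 * (n : ℝ) + 16) * p₂ * p₃ + (8 * (n : ℝ) - 12) * p₅) * z i
          + ((2 * (n : ℝ) - 4) * p₂ * p₄ - 2 * (n : ℝ) * p₆ + 2 * p₆) := by
    intro i
    have hW : ∀ j, (z i - z j) ^ 4
          * (2 * (n : ℝ) * p₂ - 4 * p₂ - 2 * (n : ℝ) * z i ^ 2 - 2 * (n : ℝ) * z j ^ 2)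
        + 2 * (z i - z j) ^ 6
        = (2 * (n : ℝ) * p₂ - 4 * p₂ - 2 * (n : ℝ) * z i ^ 2) * (z i - z j) ^ 4
          - (2 * (n : ℝ)) * ((z i - z j) ^ 4 * z j ^ 2) + 2 * (z i - z j) ^ 6 :=
      fun j => by ring
    rw [Finset.sum_erase_eq_sub (Finset.mem_univ i)]
    simp only [hW, Finset.sum_add_distrib, Finset.sum_sub_distrib, ← Finset.mul_sum]
    rw [e4 i, e4b i, e6 i]
    ring
  calc ∑ i, ∑ j ∈ univ.erase i, ∑ k ∈ (univ.erase i).erase j,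
        ∑ l ∈ ((univ.erase i).erase j).erase k, (z i - z j) ^ 4 * (z k - z l) ^ 2
      = ∑ i : Fin n,
          ((-2 * (n : ℝ) ^ 2 + 2 * (n : ℝ)) * z i ^ 6
            + (2 * (n : ℝ) ^ 2 * p₂ - 18 * (n : ℝ) * p₂ + 30 * p₂) * z i ^ 4
            + (16 * (n : ℝ) - 40) * p₃ * z i ^ 3
            + ((12 * (n : ℝ) - 24) * p₂ ^ 2 + (-14 * (n : ℝ) + 30) * p₄) * z i ^ 2
            + ((-8 * (n : ℝ) + 16) * p₂ * p₃ + (8 * (n : ℝ) - 12) * p₅) * z i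
            + ((2 * (n : ℝ) - 4) * p₂ * p₄ - 2 * (n : ℝ) * p₆ + 2 * p₆)) := by
        refine Finset.sum_congr rfl fun i _ => ?_
        rw [Finset.sum_congr rfl fun j hj =>
          Finset.sum_congr rfl fun k hk => step1 i j hj k hk]
        rw [Finset.sum_congr rfl fun j hj => step2 i j hj]
        exact step3 i
    _ = _ := by
        simp only [Finset.sum_add_distrib, ← Finset.mul_sum, ← hp₂, ← hp₃, ← hp₄, ← hp₆,
          hz, Finset.sum_const, Finset.card_univ, Fintype.card_fin, nsmul_eq_mul]
        ring
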